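/- Let N be a normal subgroup of the discrete Heisenberg group Γ such that Γ/N is non-abelian and torsion-free. Then N is the trivial subgroup. -/

import Mathlib

open Matrix

/-- A 3×3 matrix is upper unitriangular (Heisenberg) if it has the form
`[[1,a,c],[0,1,b],[0,0,1]]`. -/
def IsHeis {R : Type*} [CommRing R] (M : Matrix (Fin 3) (Fin 3) R) : Prop :=
  M = !![1, M 0 1, M 0 2; 0, 1, M 1 2; 0, 0, 1]

/-- The Heisenberg group over `R`: upper unitriangular 3×3 matrices under
matrix multiplication. -/
def Heis (R : Type*) [CommRing R] : Type _ := {M : Matrix (Fin 3) (Fin 3) R // IsHeis M}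

namespace Heis

variable {R : Type*} [CommRing R]

lemma isHeis_mk (a b c : R) : IsHeis !![1, a, c; 0, 1, b; 0, 0, 1] := by
  unfold IsHeis; norm_num <;> exact ⟨rfl, rfl⟩

lemma exists_abc {M : Matrix (Fin 3) (Fin 3) R} (h : IsHeis M) :
    ∃ a b c, M = !![1, a, c; 0, 1, b; 0, 0, 1] := ⟨_, _, _, h⟩

lemma mul_mk (a b c a' b' c' : R) :
    !![1, a, c; 0, 1, b; 0, 0, 1] * !![1, a', c'; 0, 1, b'; 0, 0, 1]
      = !![1, a + a', c + a * b' + c'; 0, 1, b + b'; 0, 0, 1] := by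
  simp [Matrix.mul_fin_three]; ring_nf <;> simp

lemma inv_mul_mk (a b c : R) :
    !![1, -a, a * b - c; 0, 1, -b; 0, 0, 1] * !![1, a, c; 0, 1, b; 0, 0, 1]
      = !![1, 0, 0; 0, 1, 0; 0, 0, 1] := by
  rw [mul_mk]; norm_num; ring_nf

instance : Group (Heis R) where
  mul x y := ⟨x.1 * y.1, by
    obtain ⟨a, b, c, hx⟩ := exists_abc x.2
    obtain ⟨a', b', c', hy⟩ := exists_abc y.2
    rw [hx, hy, mul_mk]; exact isHeis_mk _ _ _⟩
  one := ⟨!![1, 0, 0; 0, 1, 0; 0, 0, 1], isHeis_mk 0 0 0⟩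
  inv x := ⟨!![1, -(x.1 0 1), x.1 0 1 * x.1 1 2 - x.1 0 2; 0, 1, -(x.1 1 2); 0, 0, 1],
    isHeis_mk _ _ _⟩
  mul_assoc x y z := Subtype.ext (mul_assoc x.1 y.1 z.1)
  one_mul x := Subtype.ext (by
    show !![1, 0, 0; 0, 1, 0; 0, 0, 1] * x.1 = x.1
    obtain ⟨a, b, c, hx⟩ := exists_abc x.2
    rw [hx, mul_mk]; norm_num)
  mul_one x := Subtype.ext (by
    show x.1 * !![1, 0, 0; 0, 1, 0; 0, 0, 1] = x.1
    obtain ⟨a, b, c, hx⟩ := exists_abc x.2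
    rw [hx, mul_mk]; norm_num)
  inv_mul_cancel x := Subtype.ext (by
    show !![1, -(x.1 0 1), x.1 0 1 * x.1 1 2 - x.1 0 2; 0, 1, -(x.1 1 2); 0, 0, 1] * x.1
        = !![1, 0, 0; 0, 1, 0; 0, 0, 1]
    obtain ⟨a, b, c, hx⟩ := exists_abc x.2
    rw [hx]; simpa using inv_mul_mk a b c)

lemma mul_val (x y : Heis R) : (x * y).1 = x.1 * y.1 := rfl
lemma one_val : (1 : Heis R).1 = !![1, 0, 0; 0, 1, 0; 0, 0, 1] := rfl

/-- The generator γ₁ of the discrete Heisenberg group. -/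
def γ₁ : Heis ℤ := ⟨!![1, 1, 0; 0, 1, 0; 0, 0, 1], isHeis_mk 1 0 0⟩

/-- The generator γ₂ of the discrete Heisenberg group. -/
def γ₂ : Heis ℤ := ⟨!![1, 0, 0; 0, 1, 1; 0, 0, 1], isHeis_mk 0 1 0⟩

/-- Convenient constructor. -/
def mk' (a b c : ℤ) : Heis ℤ := ⟨!![1, a, c; 0, 1, b; 0, 0, 1], isHeis_mk a b c⟩

lemma mk'_mul (a b c a' b' c' : ℤ) :
    mk' a b c * mk' a' b' c' = mk' (a + a') (b + b') (c + a * b' + c') :=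
  Subtype.ext (mul_mk a b c a' b' c')

lemma mk'_one : (1 : Heis ℤ) = mk' 0 0 0 := rfl

lemma eq_mk' (x : Heis ℤ) : x = mk' (x.1 0 1) (x.1 1 2) (x.1 0 2) :=
  Subtype.ext x.2

lemma mk'_inv (a b c : ℤ) : (mk' a b c)⁻¹ = mk' (-a) (-b) (a * b - c) := by
  apply Subtype.ext
  show !![1, -((mk' a b c).1 0 1), (mk' a b c).1 0 1 * (mk' a b c).1 1 2 - (mk' a b c).1 0 2;
        0, 1, -((mk' a b c).1 1 2); 0, 0, 1] = _
  simp [mk']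

lemma mk'_inj {a b c a' b' c' : ℤ} (h : mk' a b c = mk' a' b' c') :
    a = a' ∧ b = b' ∧ c = c' := by
  have h1 := congrArg (fun x : Heis ℤ => x.1 0 1) h
  have h2 := congrArg (fun x : Heis ℤ => x.1 1 2) h
  have h3 := congrArg (fun x : Heis ℤ => x.1 0 2) h
  simp [mk'] at h1 h2 h3
  exact ⟨h1, h2, h3⟩

lemma mk'_comm (a b c a' b' c' : ℤ) :
    (mk' a b c)⁻¹ * (mk' a' b' c')⁻¹ * mk' a b c * mk' a' b' c'
      = mk' 0 0 (a * b' - a' * b) := by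
  rw [mk'_inv, mk'_inv, mk'_mul, mk'_mul, mk'_mul]
  congr 1 <;> ring

lemma z_zpow (n : ℤ) : (mk' 0 0 1) ^ n = mk' 0 0 n := by
  induction n using Int.induction_on with
  | zero => simpa using mk'_one
  | succ k ih =>
      rw [_root_.zpow_add, zpow_one, ih, mk'_mul]
      norm_num
  | pred k ih =>
      rw [sub_eq_add_neg, _root_.zpow_add, ih, _root_.zpow_neg, zpow_one, mk'_inv, mk'_mul]
      norm_num

end Heis

/-- If N is a normal subgroup of the discrete Heisenberg group such that Γ/N is
non-abelian and torsion-free, then N is trivial. -/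
theorem normal_subgroup_trivial_of_nonabelian_torsionfree_quotient
    (N : Subgroup (Heis ℤ)) [N.Normal]
    (hna : ¬ ∀ x y : Heis ℤ ⧸ N, x * y = y * x)
    (htf : ∀ x : Heis ℤ ⧸ N, x ≠ 1 → ¬ IsOfFinOrder x) :
    N = ⊥ := by
  by_contra hN
  -- obtain a nontrivial element of N
  obtain ⟨x, hxN, hx1⟩ : ∃ x ∈ N, x ≠ 1 := by
    by_contra h
    push_neg at h
    exact hN ((Subgroup.eq_bot_iff_forall N).mpr h)
  set a := x.1 0 1 with ha
  set b := x.1 1 2 with hb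
  set c := x.1 0 2 with hc
  have hx : x = Heis.mk' a b c := Heis.eq_mk' x
  -- Step 1: N contains a nontrivial central element mk' 0 0 k, k ≠ 0
  have key : ∃ k : ℤ, k ≠ 0 ∧ Heis.mk' 0 0 k ∈ N := by
    by_cases hA : a = 0
    · by_cases hB : b = 0
      · refine ⟨c, ?_, ?_⟩
        · intro hc0
          exact hx1 (by rw [hx, hA, hB, hc0, ← Heis.mk'_one])
        · rw [hx, hA, hB] at hxN; exact hxN
      · -- commute with γ₁ = mk' 1 0 0
        refine ⟨a * 0 - 1 * b, by simpa using hB, ?_⟩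
        rw [← Heis.mk'_comm a b c 1 0 0]
        have h1 : (Heis.mk' 1 0 0)⁻¹ * Heis.mk' a b c * Heis.mk' 1 0 0 ∈ N := by
          rw [hx] at hxN
          exact Subgroup.Normal.conj_mem' ‹N.Normal› _ hxN _
        have h2 := N.mul_mem (N.inv_mem (hx ▸ hxN)) h1
        convert h2 using 1
        group
    · -- commute with γ₂ = mk' 0 1 0
      refine ⟨a * 1 - 0 * b, by simpa using hA, ?_⟩
      rw [← Heis.mk'_comm a b c 0 1 0]
      have h1 : (Heis.mk' 0 1 0)⁻¹ * Heis.mk' a b c * Heis.mk' 0 1 0 ∈ N := by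
        rw [hx] at hxN
        exact Subgroup.Normal.conj_mem' ‹N.Normal› _ hxN _
      have h2 := N.mul_mem (N.inv_mem (hx ▸ hxN)) h1
      convert h2 using 1
      group
  obtain ⟨k, hk0, hkN⟩ := key
  -- Step 2: the image of z = mk' 0 0 1 in the quotient has finite order, hence z ∈ N
  set z : Heis ℤ := Heis.mk' 0 0 1 with hzdef
  have hzk : z ^ k ∈ N := by rw [hzdef, Heis.z_zpow]; exact hkN
  have hzfin : IsOfFinOrder (QuotientGroup.mk z : Heis ℤ ⧸ N) := by
    rw [isOfFinOrder_iff_pow_eq_one]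
    refine ⟨k.natAbs, Int.natAbs_pos.mpr hk0, ?_⟩
    have : ((QuotientGroup.mk z : Heis ℤ ⧸ N)) ^ (k.natAbs : ℤ) = 1 := by
      rcases Int.natAbs_eq k with h | h
      · rw [← h, ← QuotientGroup.mk_zpow, QuotientGroup.eq_one_iff]; exact hzk
      · rw [← neg_neg (k.natAbs : ℤ), ← h, _root_.zpow_neg, ← QuotientGroup.mk_zpow,
          ← QuotientGroup.mk_inv, QuotientGroup.eq_one_iff]
        exact N.inv_mem hzk
    exact_mod_cast this
  have hzN : z ∈ N := by
    by_contra hzN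
    have h1 : (QuotientGroup.mk z : Heis ℤ ⧸ N) ≠ 1 := by
      rw [Ne, QuotientGroup.eq_one_iff]; exact hzN
    exact htf _ h1 hzfin
  -- Step 3: quotient is abelian, contradiction
  apply hna
  intro u v
  obtain ⟨g, rfl⟩ := QuotientGroup.mk_surjective u
  obtain ⟨h, rfl⟩ := QuotientGroup.mk_surjective v
  show QuotientGroup.mk (g * h) = QuotientGroup.mk (h * g)
  rw [QuotientGroup.eq]
  have hg := Heis.eq_mk' g
  have hh := Heis.eq_mk' h
  set p := g.1 0 1; set q := g.1 1 2; set r := g.1 0 2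
  set s := h.1 0 1; set t := h.1 1 2; set w := h.1 0 2
  have : (g * h)⁻¹ * (h * g) = z ^ (s * q - p * t) := by
    rw [hzdef, Heis.z_zpow, hg, hh, ← Heis.mk'_comm s t w p q r]
    group
  rw [this]
  exact Subgroup.zpow_mem N hzN _
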